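/- Let X be an infinite-dimensional real Banach space with density character dens(X) = κ. Then there is a transfinite sequence (x_α, x_α*)_{α<κ} ⊆ X × X* such that x_α*(x_α) = 1 for all α < κ and x_α*(x_β) = 0 whenever β < α < κ. Moreover, hL(B_{X*}) = dens(X), where B_{X*} carries the weak* topology. -/

import Mathlib

open Cardinal Set Topology

universe u

noncomputable section

/-- The spread of a topological space: the supremum of cardinalities of discrete subspaces. -/
def spread (Z : Type u) [TopologicalSpace Z] : Cardinal.{u} :=
  ⨆ D : {D : Set Z // DiscreteTopology D}, #D.1

/-- The density of a topological space: the least cardinality of a dense subset. -/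
def densityCard (Z : Type u) [TopologicalSpace Z] : Cardinal.{u} :=
  ⨅ D : {D : Set Z // Dense D}, #D.1

/-- The hereditary density: the supremum of the densities of all subspaces. -/
def hdens (Z : Type u) [TopologicalSpace Z] : Cardinal.{u} :=
  ⨆ S : Set Z, densityCard S

/-- The Lindelöf degree: the least cardinal κ such that every open cover
has a subcover of cardinality at most κ. -/
def lindelofDeg (Z : Type u) [TopologicalSpace Z] : Cardinal.{u} :=
  sInf {κ | ∀ (ι : Type u) (U : ι → Set Z), (∀ i, IsOpen (U i)) → (⋃ i, U i) = Set.univ →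
    ∃ t : Set ι, #t ≤ κ ∧ (⋃ i ∈ t, U i) = Set.univ}

/-- The hereditary Lindelöf degree: the supremum of the Lindelöf degrees of all subspaces. -/
def hLindelof (Z : Type u) [TopologicalSpace Z] : Cardinal.{u} :=
  ⨆ S : Set Z, lindelofDeg S

/-- The closed unit ball of the dual of `X`, as a subset of the weak* dual (so that as a
topological subspace it carries the weak* topology). -/
def dualBall (X : Type u) [NormedAddCommGroup X] [NormedSpace ℝ X] : Set (WeakDual ℝ X) :=
  {f | ‖WeakDual.toStrongDual f‖ ≤ 1}

open scoped Classical

section Aux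

variable {X : Type u} [NormedAddCommGroup X] [NormedSpace ℝ X]

lemma exists_dense_card (Z : Type u) [TopologicalSpace Z] :
    ∃ D : Set Z, Dense D ∧ #D = densityCard Z := by
  have h : densityCard Z ∈ Set.range (fun D : {D : Set Z // Dense D} => #D.1) := by
    apply csInf_mem
    exact Set.range_nonempty (ι := {D : Set Z // Dense D}) (h := ⟨⟨Set.univ, dense_univ⟩⟩) _
  obtain ⟨D, hD⟩ := h
  exact ⟨D.1, D.2, hD⟩

lemma densityCard_le_of_dense {Z : Type u} [TopologicalSpace Z] {D : Set Z} (hD : Dense D) :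
    densityCard Z ≤ #D :=
  ciInf_le' (fun D : {D : Set Z // Dense D} => #D.1) ⟨D, hD⟩

lemma aleph0_le_densityCard (hX : ¬ FiniteDimensional ℝ X) : ℵ₀ ≤ densityCard X := by
  by_contra h
  push_neg at h
  obtain ⟨D, hD, hcard⟩ := exists_dense_card X
  have hfin : D.Finite := by
    rw [Set.finite_coe_iff.symm, ← Cardinal.lt_aleph0_iff_finite, hcard]; exact h
  have hDu : D = Set.univ := hfin.isClosed.closure_eq ▸ hD.closure_eq
  have hXfin : Finite X := by
    rw [← Set.finite_univ_iff, ← hDu]; exact hfin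
  have : Nontrivial X := by
    by_contra hnt
    have : Subsingleton X := not_nontrivial_iff_subsingleton.mp hnt
    exact hX (by infer_instance)
  obtain ⟨x, hx⟩ := exists_ne (0 : X)
  have : Infinite X := Infinite.of_injective (fun r : ℝ => r • x)
    (fun a b hab => by
      have := sub_eq_zero.mpr hab
      rw [← sub_smul] at this
      rcases smul_eq_zero.mp this with h | h
      · exact sub_eq_zero.mp h
      · exact absurd h hx)
  exact hXfin.false

lemma span_subset_closure_ratCombos (S : Set X) :
    (Submodule.span ℝ S : Set X) ⊆
      closure (Set.range (fun l : List (ℚ × S) => (l.map fun p => (p.1 : ℝ) • (p.2 : X)).sum)) := by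
  set T : Set X := Set.range (fun l : List (ℚ × S) => (l.map fun p => (p.1 : ℝ) • (p.2 : X)).sum)
    with hT
  have hzero : (0 : X) ∈ T := ⟨[], rfl⟩
  have hadd : ∀ x ∈ T, ∀ y ∈ T, x + y ∈ T := by
    rintro x ⟨l1, rfl⟩ y ⟨l2, rfl⟩
    exact ⟨l1 ++ l2, by simp⟩
  have hsmulq : ∀ (q : ℚ), ∀ x ∈ T, (q : ℝ) • x ∈ T := by
    rintro q x ⟨l, rfl⟩
    refine ⟨l.map fun p => (q * p.1, p.2), ?_⟩
    simp [List.map_map, Function.comp_def, List.smul_sum, smul_smul]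
  have haddc : ∀ x ∈ closure T, ∀ y ∈ closure T, x + y ∈ closure T := by
    intro x hx y hy
    have hxy : (x, y) ∈ closure (T ×ˢ T) := by rw [closure_prod_eq]; exact ⟨hx, hy⟩
    have hmap : Set.MapsTo (fun p : X × X => p.1 + p.2) (T ×ˢ T) T := by
      rintro ⟨a, b⟩ ⟨ha, hb⟩; exact hadd a ha b hb
    exact hmap.closure (by fun_prop) hxy
  have hsmulr : ∀ (r : ℝ), ∀ x ∈ closure T, r • x ∈ closure T := by
    intro r x hx
    have hA : IsClosed {r : ℝ | r • x ∈ closure T} :=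
      IsClosed.preimage (by fun_prop) isClosed_closure
    have hQ : Set.range ((↑) : ℚ → ℝ) ⊆ {r : ℝ | r • x ∈ closure T} := by
      rintro _ ⟨q, rfl⟩
      exact (Set.MapsTo.closure (fun y hy => hsmulq q y hy) (by fun_prop)) hx
    have hsub : closure (Set.range ((↑) : ℚ → ℝ)) ⊆ {r : ℝ | r • x ∈ closure T} :=
      hA.closure_subset_iff.mpr hQ
    exact hsub (by rw [Rat.denseRange_cast.closure_eq]; trivial)
  intro x hx
  refine Submodule.span_induction (fun y hy => subset_closure ⟨[(1, ⟨y, hy⟩)], by simp⟩)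
    (subset_closure hzero) (fun a b _ _ ha hb => haddc a ha b hb)
    (fun r a _ ha => hsmulr r a ha) hx

lemma closure_span_ne_top (hX : ¬ FiniteDimensional ℝ X) [CompleteSpace X] {S : Set X}
    (hS : #S < densityCard X) : (Submodule.span ℝ S).topologicalClosure ≠ ⊤ := by
  intro htop
  by_cases hfin : S.Finite
  · -- finite case: span is finite dimensional hence closed, so X is finite dimensional
    have : FiniteDimensional ℝ (Submodule.span ℝ S) := by
      have := hfin.to_subtype
      exact FiniteDimensional.span_of_finite ℝ hfin
    have hclosed : IsClosed (Submodule.span ℝ S : Set X) :=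
      Submodule.closed_of_finiteDimensional _
    have heq : (Submodule.span ℝ S) = ⊤ := by
      rw [← htop, hclosed.submodule_topologicalClosure_eq]
    rw [heq] at this
    exact hX (Module.Finite.equiv Submodule.topEquiv)
  · have hinf : Infinite S := Set.infinite_coe_iff.mpr hfin
    set T : Set X := Set.range (fun l : List (ℚ × S) => (l.map fun p => (p.1 : ℝ) • (p.2 : X)).sum)
    have hdense : Dense T := by
      have h1 : Dense (Submodule.span ℝ S : Set X) := by
        have := congrArg (fun M : Submodule ℝ X => (M : Set X)) htop
        simp only [Submodule.topologicalClosure_coe] at this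
        rw [dense_iff_closure_eq]
        simpa using this
      have h2 := span_subset_closure_ratCombos S
      rw [dense_iff_closure_eq] at h1 ⊢
      refine univ_subset_iff.mp ?_
      rw [← h1]
      exact (closure_mono h2).trans closure_closure.subset
    have hcard : #T ≤ #S := by
      calc #T ≤ #(List (ℚ × S)) := Cardinal.mk_range_le
        _ = #(ℚ × S) := Cardinal.mk_list_eq_mk _
        _ = Cardinal.lift.{u,0} #ℚ * Cardinal.lift.{0,u} #S := Cardinal.mk_prod _ _
        _ = ℵ₀ * #S := by simp [Cardinal.mk_denumerable]
        _ = #S := by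
            rw [Cardinal.aleph0_mul_eq]
            exact Cardinal.infinite_iff.mp hinf
    exact absurd ((densityCard_le_of_dense hdense).trans hcard) (not_le.mpr hS)

lemma exists_biorth_pair (hX : ¬ FiniteDimensional ℝ X) [CompleteSpace X] {S : Set X}
    (hS : #S < densityCard X) :
    ∃ p : X × (X →L[ℝ] ℝ), p.2 p.1 = 1 ∧ ∀ y ∈ S, p.2 y = 0 := by
  have hne := closure_span_ne_top hX hS
  set M := (Submodule.span ℝ S).topologicalClosure with hM
  obtain ⟨x, hx⟩ : ∃ x : X, x ∉ M := by
    by_contra h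
    push_neg at h
    exact hne (Submodule.eq_top_iff'.mpr h)
  obtain ⟨f, u, hfu, hux⟩ := geometric_hahn_banach_closed_point
    (M.convex) (Submodule.isClosed_topologicalClosure _) hx
  have hu : 0 < u := by simpa using hfu 0 M.zero_mem
  have hvanish : ∀ y ∈ M, f y = 0 := by
    intro y hy
    by_contra hfy
    have := hfu (((u + 1) / f y) • y) (M.smul_mem _ hy)
    rw [map_smul] at this
    simp only [smul_eq_mul] at this
    rw [div_mul_cancel₀ _ hfy] at this
    linarith
  have hfx : f x ≠ 0 := ne_of_gt (hu.trans hux)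
  refine ⟨(x, (f x)⁻¹ • f), ?_, ?_⟩
  · simp [inv_mul_cancel₀ hfx]
  · intro y hy
    have : y ∈ M := (Submodule.le_topologicalClosure _) (Submodule.subset_span hy)
    simp [hvanish y this]

variable (X) in
def bioSeq [CompleteSpace X] (hX : ¬ FiniteDimensional ℝ X) (μ : Cardinal.{u})
    (hμ : μ ≤ densityCard X) : μ.ord.ToType → X × (X →L[ℝ] ℝ) :=
  IsWellFounded.fix (· < ·) (fun α ih =>
    Classical.choose (exists_biorth_pair hX
      (S := Set.range fun b : (Set.Iio α) => (ih b.1 b.2).1)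
      (lt_of_le_of_lt Cardinal.mk_range_le
        (lt_of_lt_of_le (Cardinal.mk_Iio_ord_toType α) hμ))))

lemma bioSeq_spec [CompleteSpace X] (hX : ¬ FiniteDimensional ℝ X) (μ : Cardinal.{u})
    (hμ : μ ≤ densityCard X) :
    (∀ α, (bioSeq X hX μ hμ α).2 (bioSeq X hX μ hμ α).1 = 1) ∧
    ∀ α β, β < α → (bioSeq X hX μ hμ α).2 (bioSeq X hX μ hμ β).1 = 0 := by
  have hfix : ∀ α, bioSeq X hX μ hμ α =
      Classical.choose (exists_biorth_pair hX
        (S := Set.range fun b : (Set.Iio α) => (bioSeq X hX μ hμ b.1).1)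
        (lt_of_le_of_lt Cardinal.mk_range_le
          (lt_of_lt_of_le (Cardinal.mk_Iio_ord_toType α) hμ))) := by
    intro α
    exact IsWellFounded.fix_eq _ _ α
  constructor
  · intro α
    have := Classical.choose_spec (exists_biorth_pair hX
      (S := Set.range fun b : (Set.Iio α) => (bioSeq X hX μ hμ b.1).1)
      (lt_of_le_of_lt Cardinal.mk_range_le
        (lt_of_lt_of_le (Cardinal.mk_Iio_ord_toType α) hμ)))
    rw [hfix α]
    exact this.1
  · intro α β hβ
    have := Classical.choose_spec (exists_biorth_pair hX
      (S := Set.range fun b : (Set.Iio α) => (bioSeq X hX μ hμ b.1).1)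
      (lt_of_le_of_lt Cardinal.mk_range_le
        (lt_of_lt_of_le (Cardinal.mk_Iio_ord_toType α) hμ)))
    rw [hfix α]
    exact this.2 _ ⟨⟨β, hβ⟩, rfl⟩

lemma mk_mem_lindelofSet (Z : Type u) [TopologicalSpace Z] :
    Cardinal.mk Z ∈ {κ | ∀ (ι : Type u) (U : ι → Set Z), (∀ i, IsOpen (U i)) → (⋃ i, U i) = Set.univ →
      ∃ t : Set ι, #t ≤ κ ∧ (⋃ i ∈ t, U i) = Set.univ} := by
  intro ι U _ hcov
  have : ∀ z : Z, ∃ i, z ∈ U i := fun z => Set.mem_iUnion.mp (hcov ▸ Set.mem_univ z)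
  choose g hg using this
  refine ⟨Set.range g, Cardinal.mk_range_le, ?_⟩
  apply Set.eq_univ_of_forall
  intro z
  exact Set.mem_biUnion ⟨z, rfl⟩ (hg z)

lemma lindelofDeg_le_of_basis {Z : Type u} [TopologicalSpace Z] {ι : Type u} {b : ι → Set Z}
    (hb : TopologicalSpace.IsTopologicalBasis (Set.range b)) : lindelofDeg Z ≤ #ι := by
  apply csInf_le'
  intro ι' U hop hcov
  set G : Set ι := {j | ∃ i, b j ⊆ U i}
  have hchoice : ∀ j : G, ∃ i, b j.1 ⊆ U i := fun j => j.2
  choose c hc using hchoice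
  refine ⟨Set.range c, le_trans Cardinal.mk_range_le (Cardinal.mk_subtype_le _), ?_⟩
  apply Set.eq_univ_of_forall
  intro z
  obtain ⟨i, hi⟩ := Set.mem_iUnion.mp (hcov ▸ Set.mem_univ z)
  obtain ⟨B, hBmem, hzB, hBsub⟩ := hb.exists_subset_of_mem_open hi (hop i)
  obtain ⟨j, rfl⟩ := hBmem
  have hj : j ∈ G := ⟨i, hBsub⟩
  exact Set.mem_biUnion ⟨⟨j, hj⟩, rfl⟩ (hc ⟨j, hj⟩ hzB)

lemma hLindelof_le_of_basis {Z : Type u} [TopologicalSpace Z] {ι : Type u} {b : ι → Set Z}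
    (hb : TopologicalSpace.IsTopologicalBasis (Set.range b)) : hLindelof Z ≤ #ι := by
  refine ciSup_le' fun S => ?_
  have hsub : TopologicalSpace.IsTopologicalBasis
      (Set.range fun j => (Subtype.val : S → Z) ⁻¹' b j) := by
    have := hb.isInducing (f := (Subtype.val : S → Z)) IsInducing.subtypeVal
    convert this using 1
    rw [← Set.range_comp]
    rfl
  exact lindelofDeg_le_of_basis hsub

lemma le_lindelofDeg_of_separated {Z : Type u} [TopologicalSpace Z] {μ : Cardinal.{u}}
    (hreg : μ.IsRegular) (y : μ.ord.ToType → Z) (V : μ.ord.ToType → Set Z)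
    (hop : ∀ α, IsOpen (V α)) (hmem : ∀ α, y α ∈ V α)
    (hsep : ∀ α β, α < β → y β ∉ V α) (hcov : (⋃ α, V α) = Set.univ) :
    μ ≤ lindelofDeg Z := by
  refine le_csInf ⟨#Z, mk_mem_lindelofSet Z⟩ fun c hc => ?_
  obtain ⟨t, htc, htcov⟩ := hc _ V hop hcov
  by_contra hlt
  push_neg at hlt
  have hbdd : Set.Bounded (· < ·) t := by
    haveI hwo : IsWellOrder μ.ord.ToType (· < ·) := isWellOrder_lt
    have hnc : ¬ IsCofinal t := fun hcof =>
      absurd ((Order.cof_le hcof).trans htc) (by rw [Ordinal.cof_toType, hreg.cof_ord]; exact not_le.mpr hlt)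
    simp only [IsCofinal, not_forall, not_exists, not_and, not_le] at hnc
    obtain ⟨a, ha⟩ := hnc
    exact ⟨a, ha⟩
  obtain ⟨β, hβ⟩ := hbdd
  obtain ⟨α, hαt, hαmem⟩ := Set.mem_iUnion₂.mp (htcov ▸ Set.mem_univ (y β))
  exact hsep α β (hβ α hαt) hαmem


end Aux

section Aux2

variable (X : Type u) [NormedAddCommGroup X] [NormedSpace ℝ X]

def ballBasis (D : Set X) (s : Finset (D × ℚ × ℚ)) : Set ↥(dualBall X) :=
  ⋂ p ∈ s, {g : ↥(dualBall X) | (p.2.1 : ℝ) < g.1 p.1.1 ∧ (g.1 p.1.1 : ℝ) < (p.2.2 : ℝ)}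

lemma isOpen_ballBasis (D : Set X) (s : Finset (D × ℚ × ℚ)) : IsOpen (ballBasis X D s) := by
  refine isOpen_biInter_finset fun p _ => ?_
  have hcont : Continuous fun g : ↥(dualBall X) => g.1 p.1.1 :=
    (WeakDual.eval_continuous (p.1.1 : X)).comp continuous_subtype_val
  exact (isOpen_lt continuous_const hcont).inter (isOpen_lt hcont continuous_const)

lemma isBasis_ballBasis (D : Set X) (hD : Dense D) :
    TopologicalSpace.IsTopologicalBasis (Set.range (ballBasis X D)) := by
  refine TopologicalSpace.isTopologicalBasis_of_isOpen_of_nhds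
    (fun _ ⟨s, hs⟩ => hs ▸ isOpen_ballBasis X D s) ?_
  intro f U hfU hU
  obtain ⟨V, hV, hVU⟩ := isOpen_induced_iff.mp hU
  have hfV : f.1 ∈ V := by rw [← hVU] at hfU; exact hfU
  -- unpack the weak-* neighborhood
  have hVnhds : V ∈ nhds f.1 := hV.mem_nhds hfV
  rw [show (𝓝 f.1 : Filter (WeakDual ℝ X)) = Filter.comap (fun (φ : WeakDual ℝ X) (y : X) => topDualPairing ℝ X φ y) (𝓝 (fun y => topDualPairing ℝ X f.1 y)) from nhds_induced _ _, Filter.mem_comap]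
    at hVnhds
  obtain ⟨W, hW, hWV⟩ := hVnhds
  rw [nhds_pi, Filter.mem_pi] at hW
  obtain ⟨I, hIfin, t, ht, htW⟩ := hW
  have hball : ∀ x : X, ∃ ε : ℝ, 0 < ε ∧ Metric.ball (topDualPairing ℝ X f.1 x) ε ⊆ t x := by
    intro x
    exact Metric.mem_nhds_iff.mp (ht x)
  choose ε hε hεball using hball
  have hd : ∀ x : X, ∃ d ∈ D, dist x d < ε x / 3 :=
    fun x => hD.exists_dist_lt x (by have := hε x; positivity)
  choose d hdD hdist using hd
  have hab : ∀ x : X, ∃ a b : ℚ, f.1 (d x) - ε x / 3 < a ∧ (a : ℝ) < f.1 (d x) ∧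
      (f.1 (d x) : ℝ) < b ∧ (b : ℝ) < f.1 (d x) + ε x / 3 := by
    intro x
    obtain ⟨a, ha1, ha2⟩ := exists_rat_btwn (show f.1 (d x) - ε x / 3 < f.1 (d x) by
      have := hε x; linarith)
    obtain ⟨b, hb1, hb2⟩ := exists_rat_btwn (show (f.1 (d x) : ℝ) < f.1 (d x) + ε x / 3 by
      have := hε x; linarith)
    exact ⟨a, b, ha1, ha2, hb1, hb2⟩
  choose a b ha1 ha2 hb1 hb2 using hab
  set s : Finset (D × ℚ × ℚ) := hIfin.toFinset.image fun x => (⟨d x, hdD x⟩, a x, b x) with hs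
  refine ⟨ballBasis X D s, ⟨s, rfl⟩, ?_, ?_⟩
  · -- f ∈ ballBasis s
    simp only [ballBasis, Set.mem_iInter]
    rintro p hp
    simp only [hs, Finset.mem_image, hIfin.mem_toFinset] at hp
    obtain ⟨x, hxI, rfl⟩ := hp
    exact ⟨ha2 x, hb1 x⟩
  · -- ballBasis s ⊆ U
    intro g hg
    rw [← hVU]
    refine Set.mem_preimage.mpr (hWV ?_)
    refine Set.mem_preimage.mpr (htW ?_)
    intro x hxI
    refine hεball x ?_
    rw [Metric.mem_ball]
    simp only [topDualPairing_apply]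
    -- estimate |g x - f x| < ε x
    have hgd : |(g.1 (d x) : ℝ) - f.1 (d x)| < ε x / 3 := by
      have hp : (⟨d x, hdD x⟩, a x, b x) ∈ s := by
        rw [hs]
        exact Finset.mem_image_of_mem _ (hIfin.mem_toFinset.mpr hxI)
      have := Set.mem_iInter.mp (Set.mem_iInter.mp hg (⟨d x, hdD x⟩, a x, b x)) hp
      obtain ⟨h1, h2⟩ := this
      have := ha1 x; have := hb2 x
      rw [abs_sub_lt_iff]
      constructor <;> simp only at h1 h2 <;> linarith
    have hnormg : ‖WeakDual.toStrongDual g.1‖ ≤ 1 := g.2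
    have hnormf : ‖WeakDual.toStrongDual f.1‖ ≤ 1 := f.2
    have hgx : |(g.1 x : ℝ) - g.1 (d x)| ≤ ‖x - d x‖ := by
      have h1 : (g.1 x : ℝ) - g.1 (d x) = WeakDual.toStrongDual g.1 (x - d x) := by
        simp [map_sub]
      rw [h1]
      calc |WeakDual.toStrongDual g.1 (x - d x)|
          ≤ ‖WeakDual.toStrongDual g.1‖ * ‖x - d x‖ := (WeakDual.toStrongDual g.1).le_opNorm _
        _ ≤ 1 * ‖x - d x‖ := by
            apply mul_le_mul_of_nonneg_right hnormg (norm_nonneg _)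
        _ = ‖x - d x‖ := one_mul _
    have hfx : |(f.1 (d x) : ℝ) - f.1 x| ≤ ‖x - d x‖ := by
      have h1 : (f.1 (d x) : ℝ) - f.1 x = WeakDual.toStrongDual f.1 (d x - x) := by
        simp [map_sub]
      rw [h1]
      calc |WeakDual.toStrongDual f.1 (d x - x)|
          ≤ ‖WeakDual.toStrongDual f.1‖ * ‖d x - x‖ := (WeakDual.toStrongDual f.1).le_opNorm _
        _ ≤ 1 * ‖d x - x‖ := by
            apply mul_le_mul_of_nonneg_right hnormf (norm_nonneg _)
        _ = ‖x - d x‖ := by rw [one_mul, norm_sub_rev]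
    have hxd : ‖x - d x‖ < ε x / 3 := by
      have := hdist x
      rwa [dist_eq_norm] at this
    have : |(g.1 x : ℝ) - f.1 x| < ε x := by
      calc |(g.1 x : ℝ) - f.1 x|
          ≤ |(g.1 x : ℝ) - g.1 (d x)| + |(g.1 (d x) : ℝ) - f.1 (d x)| + |(f.1 (d x) : ℝ) - f.1 x| := by
            have := abs_sub_abs_le_abs_sub (g.1 x - g.1 (d x)) 0
            calc |(g.1 x : ℝ) - f.1 x| = |((g.1 x : ℝ) - g.1 (d x)) + ((g.1 (d x) : ℝ) - f.1 (d x)) + ((f.1 (d x) : ℝ) - f.1 x)| := by ring_nf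
              _ ≤ _ := by
                  refine (abs_add_le _ _).trans ?_
                  exact add_le_add (abs_add_le _ _) le_rfl
        _ < ε x / 3 + ε x / 3 + ε x / 3 := by
            refine add_lt_add (add_lt_add_of_le_of_lt (hgx.trans hxd.le) hgd) (hfx.trans_lt hxd)
        _ = ε x := by ring
    rwa [Real.dist_eq]

lemma hLindelof_dualBall_le (hX : ¬ FiniteDimensional ℝ X) :
    hLindelof (dualBall X) ≤ densityCard X := by
  obtain ⟨D, hD, hcard⟩ := exists_dense_card X
  have hκ : ℵ₀ ≤ densityCard X := aleph0_le_densityCard hX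
  have hDinf : Infinite D := by
    rw [Cardinal.infinite_iff, hcard]; exact hκ
  have h1 : #(↥D × ℚ × ℚ) = densityCard X := by
    calc #(↥D × ℚ × ℚ)
        = Cardinal.lift.{0, u} #↥D * Cardinal.lift.{u, 0} #(ℚ × ℚ) := Cardinal.mk_prod _ _
      _ = #↥D * ℵ₀ := by
          rw [Cardinal.lift_id', (by simp : #(ℚ × ℚ) = ℵ₀), Cardinal.lift_aleph0]
      _ = #↥D := Cardinal.mul_eq_left (hcard ▸ hκ) (hcard ▸ hκ) Cardinal.aleph0_ne_zero
      _ = densityCard X := hcard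
  have hFinf : Infinite (↥D × ℚ × ℚ) := by
    rw [Cardinal.infinite_iff, h1]; exact hκ
  have h2 : #(Finset (↥D × ℚ × ℚ)) = densityCard X := by
    rw [Cardinal.mk_finset_of_infinite, h1]
  calc hLindelof (dualBall X) ≤ #(Finset (↥D × ℚ × ℚ)) :=
        hLindelof_le_of_basis (isBasis_ballBasis X D hD)
    _ = densityCard X := h2

lemma densityCard_le_hLindelof [CompleteSpace X] (hX : ¬ FiniteDimensional ℝ X) :
    densityCard X ≤ hLindelof (dualBall X) := by
  refine le_of_forall_lt fun c hc => ?_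
  obtain ⟨μ, hμreg, hμle, hcμ⟩ : ∃ μ : Cardinal.{u}, μ.IsRegular ∧ μ ≤ densityCard X ∧ c < μ := by
    rcases lt_or_ge c ℵ₀ with h | h
    · exact ⟨ℵ₀, Cardinal.isRegular_aleph0, aleph0_le_densityCard hX, h⟩
    · exact ⟨Order.succ c, Cardinal.isRegular_succ h, Order.succ_le_of_lt hc, Order.lt_succ c⟩
  refine lt_of_lt_of_le hcμ ?_
  -- construct the right-separated subspace from a biorthogonal system of length μ
  obtain ⟨h1, h2⟩ := bioSeq_spec hX μ hμle
  set xs : μ.ord.ToType → X := fun α => (bioSeq X hX μ hμle α).1 with hxs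
  set fs : μ.ord.ToType → (X →L[ℝ] ℝ) := fun α => (bioSeq X hX μ hμle α).2 with hfs
  have hfs1 : ∀ α, fs α (xs α) = 1 := h1
  have hfs0 : ∀ α β, β < α → fs α (xs β) = 0 := h2
  have hfsne : ∀ α, ‖fs α‖ ≠ 0 := by
    intro α hn
    rw [norm_eq_zero] at hn
    have := hfs1 α
    rw [hn] at this
    simp at this
  have hmem : ∀ α, StrongDual.toWeakDual (‖fs α‖⁻¹ • fs α) ∈ dualBall X := by
    intro α
    simp only [dualBall, Set.mem_setOf_eq, WeakDual.toStrongDual, LinearEquiv.symm_apply_apply]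
    rw [norm_smul, norm_inv, norm_norm]
    rw [inv_mul_cancel₀ (hfsne α)]
  set Y : μ.ord.ToType → ↥(dualBall X) :=
    fun α => ⟨StrongDual.toWeakDual (‖fs α‖⁻¹ • fs α), hmem α⟩ with hY
  set S : Set ↥(dualBall X) := Set.range Y with hS
  have happ : ∀ α β, (Y β).1 (xs α) = ‖fs β‖⁻¹ * fs β (xs α) := by
    intro α β
    rfl
  have hlow : μ ≤ lindelofDeg ↥S := by
    refine le_lindelofDeg_of_separated hμreg
      (fun α => ⟨Y α, Set.mem_range_self α⟩)
      (fun α => {h : ↥S | 0 < (h.1.1 : WeakDual ℝ X) (xs α)}) ?_ ?_ ?_ ?_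
    · intro α
      have hcont : Continuous fun h : ↥S => (h.1.1 : WeakDual ℝ X) (xs α) :=
        (WeakDual.eval_continuous (xs α)).comp
          (continuous_subtype_val.comp continuous_subtype_val)
      exact isOpen_lt continuous_const hcont
    · intro α
      simp only [Set.mem_setOf_eq, happ α α, hfs1 α, mul_one]
      have : 0 < ‖fs α‖ := lt_of_le_of_ne (norm_nonneg _) (Ne.symm (hfsne α))
      exact inv_pos.mpr this
    · intro α β hαβ
      simp only [Set.mem_setOf_eq, happ α β, hfs0 β α hαβ, mul_zero]
      exact lt_irrefl 0
    · apply Set.eq_univ_of_forall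
      intro h
      obtain ⟨α, hα⟩ := h.2
      refine Set.mem_iUnion.mpr ⟨α, ?_⟩
      simp only [Set.mem_setOf_eq, ← hα, happ α α, hfs1 α, mul_one]
      have : 0 < ‖fs α‖ := lt_of_le_of_ne (norm_nonneg _) (Ne.symm (hfsne α))
      exact inv_pos.mpr this
  refine hlow.trans ?_
  exact le_ciSup (Cardinal.bddAbove_range _) S

end Aux2

/-- For an infinite-dimensional real Banach space `X` with `dens(X) = κ`,
there is a transfinite sequence `(x_α, x*_α)_{α < κ}` with `x*_α(x_α) = 1` and
`x*_α(x_β) = 0` for `β < α`. Moreover `hL(B_{X*}) = dens(X)`. -/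
theorem stmt19 (X : Type u) [NormedAddCommGroup X] [NormedSpace ℝ X] [CompleteSpace X]
    (hX : ¬ FiniteDimensional ℝ X) :
    (∃ (x : (densityCard X).ord.ToType → X)
       (f : (densityCard X).ord.ToType → (X →L[ℝ] ℝ)),
        (∀ α, f α (x α) = 1) ∧ ∀ α β, β < α → f α (x β) = 0) ∧
    hLindelof (dualBall X) = densityCard X := by
  constructor
  · obtain ⟨h1, h2⟩ := bioSeq_spec hX (densityCard X) le_rfl
    exact ⟨fun α => (bioSeq X hX (densityCard X) le_rfl α).1,
      fun α => (bioSeq X hX (densityCard X) le_rfl α).2, h1, h2⟩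
  · exact le_antisymm (hLindelof_dualBall_le X hX) (densityCard_le_hLindelof X hX)

end
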